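/- arXiv:2002.01292 — 2 statements merged into one kernel-verified Lean document; each statement's English description precedes it below -/
import Mathlib

section
/- Let f : ℝ → ℝ be monotone increasing and Lipschitz with constant m_c. Let I_m, L, ℓ > 0 with L = ℓ + 1/I_m, and let q̂, q : ℝ → ℝ be twice differentiable with I_m(q̂'' - q'') = -(f(q̂') - f(q')) - (I_m ℓ + 1)(q̂' - q') - ℓ(q̂ - q). Set s := (q̂' - q') + ℓ(q̂ - q) and ν := (I_m/2)(q̂' - q')² + (ℓ/2)(q̂ - q)² + (I_m/2)s². Then ν'(t) ≤ -(I_m L - m_c²/2)(q̂'(t) - q'(t))² - ½ s(t)² for all t. -/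
/-- Joint observer Lyapunov derivative estimate (Lemma for the joint observer):
with error dynamics `I_m(q̂'' - q'') = -(f(q̂') - f(q')) - (I_mℓ + 1)(q̂' - q') - ℓ(q̂ - q)`,
`s = (q̂' - q') + ℓ(q̂ - q)` and
`ν = (I_m/2)(q̂' - q')² + (ℓ/2)(q̂ - q)² + (I_m/2)s²`, we have
`ν' ≤ -(I_m L - m_c²/2)(q̂' - q')² - ½ s²`. -/
theorem joint_observer_lyapunov
    (f : ℝ → ℝ) (hf : Monotone f) (mc : ℝ) (hfl : LipschitzWith (Real.toNNReal mc) f)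
    (Im L ℓ : ℝ) (hIm : 0 < Im) (hL : 0 < L) (hℓ : 0 < ℓ) (hLℓ : L = ℓ + 1 / Im)
    (q qhat q' qhat' q'' qhat'' : ℝ → ℝ)
    (hq : ∀ t, HasDerivAt q (q' t) t)
    (hq' : ∀ t, HasDerivAt q' (q'' t) t)
    (hqhat : ∀ t, HasDerivAt qhat (qhat' t) t)
    (hqhat' : ∀ t, HasDerivAt qhat' (qhat'' t) t)
    (hdyn : ∀ t, Im * (qhat'' t - q'' t) =
      -(f (qhat' t) - f (q' t)) - (Im * ℓ + 1) * (qhat' t - q' t) - ℓ * (qhat t - q t))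
    (s ν : ℝ → ℝ)
    (hs : s = fun t => (qhat' t - q' t) + ℓ * (qhat t - q t))
    (hν : ν = fun t => Im / 2 * (qhat' t - q' t) ^ 2 + ℓ / 2 * (qhat t - q t) ^ 2
      + Im / 2 * (s t) ^ 2) :
    ∀ (t ν' : ℝ), HasDerivAt ν ν' t →
      ν' ≤ -(Im * L - mc ^ 2 / 2) * (qhat' t - q' t) ^ 2 - (1 / 2) * (s t) ^ 2 := by
  intro t ν' hν'
  set e : ℝ := qhat t - q t with hE
  set e' := qhat' t - q' t with hE'
  set e'' := qhat'' t - q'' t with hE''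
  set Δf := f (qhat' t) - f (q' t) with hΔ
  have he : HasDerivAt (fun u => qhat u - q u) e' t := (hqhat t).sub (hq t)
  have he' : HasDerivAt (fun u => qhat' u - q' u) e'' t := (hqhat' t).sub (hq' t)
  have hsd : HasDerivAt s (e'' + ℓ * e') t := by
    rw [hs]; exact he'.add (he.const_mul ℓ)
  have hνd : HasDerivAt ν
      (Im / 2 * (2 * e' ^ 1 * e'') + ℓ / 2 * (2 * e ^ 1 * e')
        + Im / 2 * (2 * (s t) ^ 1 * (e'' + ℓ * e'))) t := by
    rw [hν]
    exact (((he'.pow 2).const_mul (Im / 2)).add ((he.pow 2).const_mul (ℓ / 2))).add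
      ((hsd.pow 2).const_mul (Im / 2))
  have hνval : ν' = Im * e' * e'' + ℓ * e * e' + Im * s t * (e'' + ℓ * e') := by
    have := hν'.unique hνd
    rw [this]; ring
  have hmono : 0 ≤ e' * Δf := by
    rcases le_total (q' t) (qhat' t) with h | h
    · have := hf h; simp only [hE', hΔ]; nlinarith
    · have := hf h; simp only [hE', hΔ]; nlinarith
  have hlip : Δf ^ 2 ≤ mc ^ 2 * e' ^ 2 := by
    have h1 : |Δf| ≤ (Real.toNNReal mc : ℝ) * |e'| := by
      have := hfl.dist_le_mul (qhat' t) (q' t)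
      simpa [Real.dist_eq, hΔ, hE'] using this
    have h2 : (Real.toNNReal mc : ℝ) ≤ |mc| := by
      simp [Real.coe_toNNReal']; rcases le_total mc 0 with h | h <;> simp [abs_of_nonpos, abs_of_nonneg, h] <;> linarith
    calc Δf ^ 2 = |Δf| ^ 2 := (sq_abs _).symm
      _ ≤ ((Real.toNNReal mc : ℝ) * |e'|) ^ 2 := by
          apply sq_le_sq' _ h1; nlinarith [abs_nonneg Δf]
      _ ≤ (|mc| * |e'|) ^ 2 := by
          apply pow_le_pow_left₀ (by positivity) (mul_le_mul_of_nonneg_right h2 (abs_nonneg _))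
      _ = mc ^ 2 * e' ^ 2 := by rw [mul_pow, sq_abs, sq_abs]
  have hst : s t = e' + ℓ * e := by rw [hs]
  have hdynt := hdyn t
  have hImL : Im * L = Im * ℓ + 1 := by
    rw [hLℓ]; field_simp
  have hdyn' : Im * e'' = -Δf - (Im * ℓ + 1) * e' - ℓ * e := hdyn t
  have key : ν' = -(e' * Δf) - (Im * ℓ + 1) * e' ^ 2 - s t * Δf - s t ^ 2 := by
    rw [hνval, hst]
    linear_combination (e' + (e' + ℓ * e)) * hdyn'
  have h3 : (Im * ℓ + 1) * e' ^ 2 = Im * L * e' ^ 2 := by rw [hImL]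
  rw [key, hst]
  clear_value e e' e'' Δf
  have h4 : -((e' + ℓ * e) * Δf) ≤ 1/2 * (e' + ℓ * e) ^ 2 + 1/2 * Δf ^ 2 := by
    nlinarith [sq_nonneg ((e' + ℓ * e) + Δf)]
  linarith [hmono, hlip, h3, h4]
end

section
/- Under the assumptions of the previous joint-observer lemma, if additionally L > m_c²/(2 I_m), then ν is nonincreasing and (q̂' - q')² and s² are integrable bounded quantities; in particular ν(t) ≤ ν(0) for all t ≥ 0. -/
/-- Under the joint observer assumptions, if additionally `L > m_c²/(2 I_m)`,
then the Lyapunov function `ν` is nonincreasing on `[0, ∞)`; in particular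
`ν(t) ≤ ν(0)` for all `t ≥ 0`. -/
theorem joint_observer_nu_nonincreasing
    (f : ℝ → ℝ) (hf : Monotone f) (mc : ℝ) (hfl : LipschitzWith (Real.toNNReal mc) f)
    (Im L ℓ : ℝ) (hIm : 0 < Im) (hℓ : 0 < ℓ) (hLℓ : L = ℓ + 1 / Im)
    (hgain : L > mc ^ 2 / (2 * Im))
    (q qhat q' qhat' q'' qhat'' : ℝ → ℝ)
    (hq : ∀ t, HasDerivAt q (q' t) t)
    (hq' : ∀ t, HasDerivAt q' (q'' t) t)
    (hqhat : ∀ t, HasDerivAt qhat (qhat' t) t)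
    (hqhat' : ∀ t, HasDerivAt qhat' (qhat'' t) t)
    (hdyn : ∀ t, Im * (qhat'' t - q'' t) =
      -(f (qhat' t) - f (q' t)) - (Im * ℓ + 1) * (qhat' t - q' t) - ℓ * (qhat t - q t))
    (s ν : ℝ → ℝ)
    (hs : s = fun t => (qhat' t - q' t) + ℓ * (qhat t - q t))
    (hν : ν = fun t => Im / 2 * (qhat' t - q' t) ^ 2 + ℓ / 2 * (qhat t - q t) ^ 2
      + Im / 2 * (s t) ^ 2) :
    AntitoneOn ν (Set.Ici (0 : ℝ)) ∧ ∀ t ≥ (0 : ℝ), ν t ≤ ν 0 := by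
  have he' : ∀ t, HasDerivAt (fun t => qhat' t - q' t) (qhat'' t - q'' t) t :=
    fun t => (hqhat' t).sub (hq' t)
  have he : ∀ t, HasDerivAt (fun t => qhat t - q t) (qhat' t - q' t) t :=
    fun t => (hqhat t).sub (hq t)
  have hS : ∀ t, HasDerivAt s ((qhat'' t - q'' t) + ℓ * (qhat' t - q' t)) t := by
    intro t
    rw [hs]
    exact (he' t).add ((he t).const_mul ℓ)
  -- derivative of ν
  set D : ℝ → ℝ := fun t =>
    Im / 2 * ((2:ℕ) * (qhat' t - q' t) ^ 1 * (qhat'' t - q'' t))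
    + ℓ / 2 * ((2:ℕ) * (qhat t - q t) ^ 1 * (qhat' t - q' t))
    + Im / 2 * ((2:ℕ) * (s t) ^ 1 * ((qhat'' t - q'' t) + ℓ * (qhat' t - q' t))) with hD
  have hνd : ∀ t, HasDerivAt ν (D t) t := by
    intro t
    rw [hν, hD]
    exact ((((he' t).pow 2).const_mul (Im / 2)).add
      (((he t).pow 2).const_mul (ℓ / 2))).add (((hS t).pow 2).const_mul (Im / 2))
  have hDle : ∀ t, D t ≤ 0 := by
    intro t
    set a := qhat' t - q' t with ha
    set e := qhat t - q t with he0
    set b := s t with hb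
    set d := f (qhat' t) - f (q' t) with hd
    have key : Im * (qhat'' t - q'' t) = -d - (Im * ℓ + 1) * a - ℓ * e := hdyn t
    have hbs : b = a + ℓ * e := by rw [hb, hs]
    have hDval : D t = (a + b) * (Im * (qhat'' t - q'' t)) + ℓ * e * a + Im * ℓ * b * a := by
      rw [hD]; push_cast; ring
    rw [hDval, key, hbs]
    -- facts
    have had : 0 ≤ a * d := by
      rcases le_total (q' t) (qhat' t) with h | h
      · exact mul_nonneg (by simp [ha]; linarith) (by simp [hd]; linarith [hf h])
      · have h1 : a ≤ 0 := by simp [ha]; linarith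
        have h2 : d ≤ 0 := by simp [hd]; linarith [hf h]
        nlinarith
    have hlip : |d| ≤ |mc| * |a| := by
      have := hfl.dist_le_mul (qhat' t) (q' t)
      rw [Real.dist_eq, Real.dist_eq] at this
      have hc : (Real.toNNReal mc : ℝ) ≤ |mc| := by
        rw [Real.coe_toNNReal']
        exact max_le (le_abs_self mc) (abs_nonneg mc)
      calc |d| ≤ (Real.toNNReal mc : ℝ) * |qhat' t - q' t| := this
        _ ≤ |mc| * |a| := by
            apply mul_le_mul_of_nonneg_right hc (abs_nonneg _)
    have hd2 : d ^ 2 ≤ mc ^ 2 * a ^ 2 := by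
      have h := pow_le_pow_left₀ (abs_nonneg d) hlip 2
      simpa [mul_pow, sq_abs] using h
    have hK : mc ^ 2 / 2 < Im * ℓ + 1 := by
      have h1 : mc ^ 2 / (2 * Im) < ℓ + 1 / Im := by rw [← hLℓ]; exact hgain
      have h2 := mul_lt_mul_of_pos_left h1 hIm
      calc mc ^ 2 / 2 = Im * (mc ^ 2 / (2 * Im)) := by field_simp
        _ < Im * (ℓ + 1 / Im) := h2
        _ = Im * ℓ + 1 := by field_simp
    have hbval : (a + (a + ℓ * e)) * (-d - (Im * ℓ + 1) * a - ℓ * e) + ℓ * e * a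
        + Im * ℓ * (a + ℓ * e) * a
        = -(a * d) - (Im * ℓ + 1) * a ^ 2 - (a + ℓ * e) * d - (a + ℓ * e) ^ 2 := by ring
    rw [hbval]
    nlinarith [sq_nonneg (a + ℓ * e + d), sq_nonneg (a + ℓ * e - d), sq_nonneg a,
      mul_nonneg (le_of_lt (sub_pos.2 hK)) (sq_nonneg a), had, hd2]
  have hanti : AntitoneOn ν (Set.Ici (0 : ℝ)) := by
    apply antitoneOn_of_deriv_nonpos (convex_Ici 0)
    · exact fun t _ => (hνd t).continuousAt.continuousWithinAt
    · intro t ht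
      exact ((hνd t).differentiableAt).differentiableWithinAt
    · intro t ht
      rw [(hνd t).deriv]
      exact hDle t
  exact ⟨hanti, fun t ht => hanti (Set.self_mem_Ici) ht ht⟩
end
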